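/- Let a₁ = (1/(2√3))·(1, 1, 1), a₂ = (1/(2√3))·(−1, −1, 1), a₃ = (1/(2√3))·(−1, 1, −1), a₄ = (1/(2√3))·(1, −1, −1) in ℝ³. Then ∑_{i=1}^4 a_i = 0, ∑_{i=1}^4 ‖a_i‖ = 2, and for every pair of distinct indices i ≠ j, ‖a_i‖ + ‖a_j‖ − ‖a_i + a_j‖ = 1 − 1/√3. -/

import Mathlib

set_option maxHeartbeats 1000000


/-- The four vertices `(1/(2√3))·(±1, ±1, ±1)` (even sign patterns) of a regular
tetrahedron in `ℝ³` sum to zero, their norms sum to `2`, and for every pair of distinct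
indices `i ≠ j` one has `‖aᵢ‖ + ‖aⱼ‖ − ‖aᵢ + aⱼ‖ = 1 − 1/√3`. -/
theorem regular_tetrahedron_vertices (a : Fin 4 → EuclideanSpace ℝ (Fin 3))
    (ha0 : a 0 = (1 / (2 * Real.sqrt 3)) • (WithLp.equiv 2 (Fin 3 → ℝ)).symm ![1, 1, 1])
    (ha1 : a 1 = (1 / (2 * Real.sqrt 3)) • (WithLp.equiv 2 (Fin 3 → ℝ)).symm ![-1, -1, 1])
    (ha2 : a 2 = (1 / (2 * Real.sqrt 3)) • (WithLp.equiv 2 (Fin 3 → ℝ)).symm ![-1, 1, -1])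
    (ha3 : a 3 = (1 / (2 * Real.sqrt 3)) • (WithLp.equiv 2 (Fin 3 → ℝ)).symm ![1, -1, -1]) :
    (∑ i, a i = 0) ∧ (∑ i, ‖a i‖ = 2) ∧
    (∀ i j : Fin 4, i ≠ j →
      ‖a i‖ + ‖a j‖ - ‖a i + a j‖ = 1 - 1 / Real.sqrt 3) := by
  have hs : (0:ℝ) < Real.sqrt 3 := Real.sqrt_pos.mpr (by norm_num)
  have hs3 : Real.sqrt 3 * Real.sqrt 3 = 3 := Real.mul_self_sqrt (by norm_num)
  set c : ℝ := 1 / (2 * Real.sqrt 3) with hc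
  have hc2 : c * c = 1 / 12 := by
    rw [hc]; field_simp; nlinarith [hs3]
  have h14 : Real.sqrt (1/4 : ℝ) = 1/2 := by
    rw [show (1:ℝ)/4 = (1/2)^2 by norm_num, Real.sqrt_sq]; norm_num
  have h13 : Real.sqrt (1/3 : ℝ) = 1 / Real.sqrt 3 := by
    rw [one_div, one_div, ← Real.sqrt_inv]
  have hnorm : ∀ x : EuclideanSpace ℝ (Fin 3),
      ‖x‖ = Real.sqrt (x 0 ^ 2 + x 1 ^ 2 + x 2 ^ 2) := by
    intro x
    rw [EuclideanSpace.norm_eq]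
    congr 1
    simp [Fin.sum_univ_three, Real.norm_eq_abs, sq_abs]
  have n0 : ‖a 0‖ = 1/2 := by
    rw [ha0, hnorm]
    simp only [PiLp.smul_apply, WithLp.equiv_symm_apply, PiLp.toLp_apply, smul_eq_mul,
      Matrix.cons_val_zero, Matrix.cons_val_one, Matrix.head_cons,
      Matrix.cons_val_two, Matrix.tail_cons]
    convert h14 using 2; nlinarith [hc2]
  have n1 : ‖a 1‖ = 1/2 := by
    rw [ha1, hnorm]
    simp only [PiLp.smul_apply, WithLp.equiv_symm_apply, PiLp.toLp_apply, smul_eq_mul,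
      Matrix.cons_val_zero, Matrix.cons_val_one, Matrix.head_cons,
      Matrix.cons_val_two, Matrix.tail_cons]
    convert h14 using 2; nlinarith [hc2]
  have n2 : ‖a 2‖ = 1/2 := by
    rw [ha2, hnorm]
    simp only [PiLp.smul_apply, WithLp.equiv_symm_apply, PiLp.toLp_apply, smul_eq_mul,
      Matrix.cons_val_zero, Matrix.cons_val_one, Matrix.head_cons,
      Matrix.cons_val_two, Matrix.tail_cons]
    convert h14 using 2; nlinarith [hc2]
  have n3 : ‖a 3‖ = 1/2 := by
    rw [ha3, hnorm]
    simp only [PiLp.smul_apply, WithLp.equiv_symm_apply, PiLp.toLp_apply, smul_eq_mul,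
      Matrix.cons_val_zero, Matrix.cons_val_one, Matrix.head_cons,
      Matrix.cons_val_two, Matrix.tail_cons]
    convert h14 using 2; nlinarith [hc2]
  have key : ∀ i : Fin 4, ‖a i‖ = 1/2 := by
    intro i
    fin_cases i
    · exact n0
    · exact n1
    · exact n2
    · exact n3
  have s01 : ‖a 0 + a 1‖ = 1 / Real.sqrt 3 := by
    rw [ha0, ha1, hnorm]
    simp only [PiLp.add_apply, PiLp.smul_apply, WithLp.equiv_symm_apply, PiLp.toLp_apply, smul_eq_mul,
      Matrix.cons_val_zero, Matrix.cons_val_one, Matrix.head_cons,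
      Matrix.cons_val_two, Matrix.tail_cons]
    convert h13 using 2; nlinarith [hc2]
  have s02 : ‖a 0 + a 2‖ = 1 / Real.sqrt 3 := by
    rw [ha0, ha2, hnorm]
    simp only [PiLp.add_apply, PiLp.smul_apply, WithLp.equiv_symm_apply, PiLp.toLp_apply, smul_eq_mul,
      Matrix.cons_val_zero, Matrix.cons_val_one, Matrix.head_cons,
      Matrix.cons_val_two, Matrix.tail_cons]
    convert h13 using 2; nlinarith [hc2]
  have s03 : ‖a 0 + a 3‖ = 1 / Real.sqrt 3 := by
    rw [ha0, ha3, hnorm]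
    simp only [PiLp.add_apply, PiLp.smul_apply, WithLp.equiv_symm_apply, PiLp.toLp_apply, smul_eq_mul,
      Matrix.cons_val_zero, Matrix.cons_val_one, Matrix.head_cons,
      Matrix.cons_val_two, Matrix.tail_cons]
    convert h13 using 2; nlinarith [hc2]
  have s12 : ‖a 1 + a 2‖ = 1 / Real.sqrt 3 := by
    rw [ha1, ha2, hnorm]
    simp only [PiLp.add_apply, PiLp.smul_apply, WithLp.equiv_symm_apply, PiLp.toLp_apply, smul_eq_mul,
      Matrix.cons_val_zero, Matrix.cons_val_one, Matrix.head_cons,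
      Matrix.cons_val_two, Matrix.tail_cons]
    convert h13 using 2; nlinarith [hc2]
  have s13 : ‖a 1 + a 3‖ = 1 / Real.sqrt 3 := by
    rw [ha1, ha3, hnorm]
    simp only [PiLp.add_apply, PiLp.smul_apply, WithLp.equiv_symm_apply, PiLp.toLp_apply, smul_eq_mul,
      Matrix.cons_val_zero, Matrix.cons_val_one, Matrix.head_cons,
      Matrix.cons_val_two, Matrix.tail_cons]
    convert h13 using 2; nlinarith [hc2]
  have s23 : ‖a 2 + a 3‖ = 1 / Real.sqrt 3 := by
    rw [ha2, ha3, hnorm]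
    simp only [PiLp.add_apply, PiLp.smul_apply, WithLp.equiv_symm_apply, PiLp.toLp_apply, smul_eq_mul,
      Matrix.cons_val_zero, Matrix.cons_val_one, Matrix.head_cons,
      Matrix.cons_val_two, Matrix.tail_cons]
    convert h13 using 2; nlinarith [hc2]
  have snorm : ∀ i j : Fin 4, i ≠ j → ‖a i + a j‖ = 1 / Real.sqrt 3 := by
    intro i j hij
    fin_cases i <;> fin_cases j <;>
      first
        | exact absurd rfl hij
        | exact s01 | exact s02 | exact s03 | exact s12 | exact s13 | exact s23
        | (rw [add_comm]
           first
             | exact s01 | exact s02 | exact s03 | exact s12 | exact s13 | exact s23)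
  refine ⟨?_, ?_, ?_⟩
  · have : (∑ i, a i) = a 0 + a 1 + a 2 + a 3 := Fin.sum_univ_four a
    rw [this, ha0, ha1, ha2, ha3]
    ext k
    fin_cases k <;>
      simp [PiLp.add_apply, PiLp.smul_apply, WithLp.equiv_symm_apply, PiLp.toLp_apply]
  · rw [Fin.sum_univ_four, n0, n1, n2, n3]; norm_num
  · intro i j hij
    rw [key i, key j, snorm i j hij]
    ring
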